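/- Let p ≥ 2 be a real number, φ(t) := p·log(1 + t)·t^{p−1} for t ≥ 0, and Φ(t) := ∫₀ᵗ φ(τ) dτ. Then the function t ↦ Φ(√t) is convex on [0, ∞). -/

import Mathlib

open Real Set

noncomputable section

/-- for `φ(t) = p log(1+t) t^{p−1}` with primitive `Φ`, the map
`t ↦ Φ(√t)` is convex on `[0,∞)`. -/
theorem statement17 (p : ℝ) (hp : 2 ≤ p)
    (φ : ℝ → ℝ) (hφ : ∀ t ≥ (0:ℝ), φ t = p * Real.log (1 + t) * t ^ (p - 1))
    (Φ : ℝ → ℝ) (hΦ : ∀ t : ℝ, Φ t = ∫ τ in (0:ℝ)..t, φ τ) :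
    ConvexOn ℝ (Set.Ici 0) fun t => Φ (Real.sqrt t) := by
  set ψ : ℝ → ℝ := fun t => p * Real.log (1 + t) * t ^ (p - 1) with hψ
  -- continuity of ψ on [0,∞)
  have hψc : ContinuousOn ψ (Ici 0) := by
    intro x hx
    have hx0 : (0:ℝ) ≤ x := hx
    refine ContinuousWithinAt.mul (ContinuousWithinAt.mul continuousWithinAt_const ?_) ?_
    · exact ((Real.continuousAt_log (fun h => by linarith [show (1:ℝ) + x = 0 from h])).comp
        ((continuous_const.add continuous_id).continuousAt)).continuousWithinAt
    · exact (Real.continuousAt_rpow_const x (p - 1) (Or.inr (by linarith))).continuousWithinAt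
  have hψIoi : ContinuousOn ψ (Ioi 0) := hψc.mono Ioi_subset_Ici_self
  have hint : ∀ x : ℝ, 0 ≤ x → IntervalIntegrable ψ MeasureTheory.volume 0 x := by
    intro x hx
    apply ContinuousOn.intervalIntegrable
    rw [uIcc_of_le hx]
    exact hψc.mono (Icc_subset_Ici_self)
  set F : ℝ → ℝ := fun x => ∫ τ in (0:ℝ)..x, ψ τ with hF
  have hfeq : (fun t => Φ (Real.sqrt t)) = fun t => F (Real.sqrt t) := by
    funext t
    rw [hΦ]
    refine intervalIntegral.integral_congr fun τ hτ => ?_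
    rw [uIcc_of_le (Real.sqrt_nonneg t)] at hτ
    exact hφ τ hτ.1
  rw [hfeq]
  -- derivative of F at positive points
  have hFd : ∀ x : ℝ, 0 < x → HasDerivAt F (ψ x) x := by
    intro x hx
    exact intervalIntegral.integral_hasDerivAt_right (hint x hx.le)
      (hψIoi.stronglyMeasurableAtFilter isOpen_Ioi x hx)
      (hψIoi.continuousAt (Ioi_mem_nhds hx))
  -- derivative of the composition at positive points
  have hGd : ∀ t : ℝ, 0 < t →
      HasDerivAt (fun t => F (Real.sqrt t)) (ψ (Real.sqrt t) * (1 / (2 * Real.sqrt t))) t := by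
    intro t ht
    exact (hFd (Real.sqrt t) (Real.sqrt_pos.2 ht)).comp t (Real.hasDerivAt_sqrt ht.ne')
  -- simplified form of the derivative
  have key : ∀ t : ℝ, 0 < t → ψ (Real.sqrt t) * (1 / (2 * Real.sqrt t))
      = p / 2 * (Real.log (1 + Real.sqrt t) * Real.sqrt t ^ (p - 2)) := by
    intro t ht
    have hs : 0 < Real.sqrt t := Real.sqrt_pos.2 ht
    have h1 : Real.sqrt t ^ (p - 1) = Real.sqrt t ^ (p - 2) * Real.sqrt t := by
      rw [← Real.rpow_add_one hs.ne' (p - 2)]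
      ring_nf
    simp only [hψ]
    rw [h1]
    field_simp
  -- continuity of F on [0,∞)
  have hFc : ContinuousOn F (Ici 0) := by
    intro x hx
    rcases eq_or_lt_of_le (show (0:ℝ) ≤ x from hx) with h | h
    · have : HasDerivWithinAt F (ψ 0) (Ici 0) 0 :=
        intervalIntegral.integral_hasDerivWithinAt_right (hint 0 le_rfl)
          ⟨Ioi 0, self_mem_nhdsWithin, hψIoi.aestronglyMeasurable measurableSet_Ioi⟩
          ((hψc 0 self_mem_Ici).mono Ioi_subset_Ici_self)
      rw [← h]
      exact this.continuousWithinAt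
    · exact (hFd x h).continuousAt.continuousWithinAt
  refine MonotoneOn.convexOn_of_deriv (convex_Ici 0) ?_ ?_ ?_
  · exact hFc.comp Real.continuous_sqrt.continuousOn fun t _ => Real.sqrt_nonneg t
  · rw [interior_Ici]
    intro t ht
    exact (hGd t ht).differentiableAt.differentiableWithinAt
  · rw [interior_Ici]
    intro a ha b hb hab
    rw [(hGd a ha).deriv, (hGd b hb).deriv, key a ha, key b hb]
    have hsab : Real.sqrt a ≤ Real.sqrt b := Real.sqrt_le_sqrt hab
    have hla : 0 ≤ Real.log (1 + Real.sqrt a) :=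
      Real.log_nonneg (by nlinarith [Real.sqrt_nonneg a])
    have hlab : Real.log (1 + Real.sqrt a) ≤ Real.log (1 + Real.sqrt b) :=
      Real.log_le_log (by nlinarith [Real.sqrt_nonneg a]) (by linarith)
    have hra : (0:ℝ) ≤ Real.sqrt a ^ (p - 2) := Real.rpow_nonneg (Real.sqrt_nonneg a) _
    have hrab : Real.sqrt a ^ (p - 2) ≤ Real.sqrt b ^ (p - 2) :=
      Real.rpow_le_rpow (Real.sqrt_nonneg a) hsab (by linarith)
    have hp2 : (0:ℝ) ≤ p / 2 := by linarith
    exact mul_le_mul_of_nonneg_left (mul_le_mul hlab hrab hra (Real.log_nonneg (by nlinarith [Real.sqrt_nonneg b]))) hp2
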